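/- Let a > 0, r ∈ ℝ, λ ≥ 0, and f(β) = (a/2)(β−r)² + λ|β(β−1)|. Every global minimizer β* of f over ℝ satisfies: if r ≤ 0 then β* ∈ [r, 0]; if r ≥ 1 then β* ∈ [1, r]; and if 0 ≤ r ≤ 1 then β* ∈ [0, 1]. -/

import Mathlib

theorem product_penalty_minimizer_location (a r l : ℝ) (ha : 0 < a) (hl : 0 ≤ l)
    (b : ℝ)
    (hb : IsMinOn (fun β : ℝ => a / 2 * (β - r) ^ 2 + l * |β * (β - 1)|) Set.univ b) :
    (r ≤ 0 → b ∈ Set.Icc r 0) ∧ (r ≥ 1 → b ∈ Set.Icc 1 r) ∧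
    (0 ≤ r ∧ r ≤ 1 → b ∈ Set.Icc (0 : ℝ) 1) := by
  have key : ∀ c : ℝ, a / 2 * (b - r) ^ 2 + l * |b * (b - 1)| ≤
      a / 2 * (c - r) ^ 2 + l * |c * (c - 1)| :=
    fun c => isMinOn_iff.mp hb c (Set.mem_univ c)
  have habs := abs_nonneg (b * (b - 1))
  refine ⟨?_, ?_, ?_⟩
  · intro hr
    constructor
    · by_contra h; push_neg at h
      have h1 := key r
      rw [abs_of_nonneg (show (0:ℝ) ≤ b * (b - 1) by nlinarith),
        abs_of_nonneg (show (0:ℝ) ≤ r * (r - 1) by nlinarith)] at h1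
      have hpen : r * (r - 1) ≤ b * (b - 1) := by nlinarith
      nlinarith [mul_le_mul_of_nonneg_left hpen hl,
        mul_pos ha (mul_pos (sub_pos.mpr h) (sub_pos.mpr h))]
    · by_contra h; push_neg at h
      have h1 := key 0
      norm_num at h1
      nlinarith [mul_nonneg hl (mul_nonneg (abs_nonneg b) (abs_nonneg (b - 1))),
        mul_pos ha (mul_pos h (show (0:ℝ) < b - 2 * r by linarith))]
  · intro hr
    constructor
    · by_contra h; push_neg at h
      have h1 := key 1
      norm_num at h1
      nlinarith [mul_nonneg hl (mul_nonneg (abs_nonneg b) (abs_nonneg (b - 1))),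
        mul_pos ha (mul_pos (show (0:ℝ) < 1 - b by linarith)
          (show (0:ℝ) < 2 * r - b - 1 by linarith))]
    · by_contra h; push_neg at h
      have h1 := key r
      rw [abs_of_nonneg (show (0:ℝ) ≤ b * (b - 1) by nlinarith),
        abs_of_nonneg (show (0:ℝ) ≤ r * (r - 1) by nlinarith)] at h1
      have hpen : r * (r - 1) ≤ b * (b - 1) := by nlinarith
      nlinarith [mul_le_mul_of_nonneg_left hpen hl,
        mul_pos ha (mul_pos (sub_pos.mpr h) (sub_pos.mpr h))]
  · rintro ⟨hr0, hr1⟩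
    constructor
    · by_contra h; push_neg at h
      have h1 := key 0
      norm_num at h1
      nlinarith [mul_nonneg hl (mul_nonneg (abs_nonneg b) (abs_nonneg (b - 1))),
        mul_pos ha (mul_pos (show (0:ℝ) < -b by linarith)
          (show (0:ℝ) < 2 * r - b by linarith))]
    · by_contra h; push_neg at h
      have h1 := key 1
      norm_num at h1
      nlinarith [mul_nonneg hl (mul_nonneg (abs_nonneg b) (abs_nonneg (b - 1))),
        mul_pos ha (mul_pos (show (0:ℝ) < b - 1 by linarith)
          (show (0:ℝ) < b + 1 - 2 * r by linarith))]
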